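/- arXiv:2408.07941 — 2 statements merged into one kernel-verified Lean document; each statement's English description precedes it below -/
import Mathlib

section
/- Let A be a real symmetric n×n matrix, u ∈ ℝ with uI − A positive definite, and w ∈ ℝⁿ. Suppose wᵀ(uI − A)⁻¹ w ≤ ε′ for some ε′ < 1. Then uI − A − w wᵀ is positive definite and Tr[(uI − A − w wᵀ)⁻¹] ≤ Tr[(uI − A)⁻¹] + (wᵀ(uI − A)⁻² w)/(1 − ε′). -/
open Matrix

variable {n : ℕ}

lemma vmv_mul (w : Fin n → ℝ) (X : Matrix (Fin n) (Fin n) ℝ) :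
    vecMulVec w w * X * vecMulVec w w = (w ⬝ᵥ X *ᵥ w) • vecMulVec w w := by
  ext i j
  simp only [mul_apply, vecMulVec_apply, Matrix.smul_apply, smul_eq_mul, dotProduct, mulVec,
    Finset.sum_mul, Finset.mul_sum]
  rw [Finset.sum_comm]
  refine Finset.sum_congr rfl fun k _ => ?_
  refine Finset.sum_congr rfl fun l _ => ?_
  ring

lemma trace_vmv_mul (w : Fin n → ℝ) (X : Matrix (Fin n) (Fin n) ℝ) :
    (vecMulVec w w * X).trace = w ⬝ᵥ X *ᵥ w := by
  simp only [trace, diag, mul_apply, vecMulVec_apply, dotProduct, mulVec, Finset.mul_sum]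
  rw [Finset.sum_comm]
  congr 1; ext i
  congr 1; ext j
  ring

lemma dp_symm {M : Matrix (Fin n) (Fin n) ℝ} (hM : Mᵀ = M) (a b : Fin n → ℝ) :
    a ⬝ᵥ M *ᵥ b = b ⬝ᵥ M *ᵥ a := by
  rw [dotProduct_mulVec, ← mulVec_transpose, hM, dotProduct_comm]

lemma cs {M : Matrix (Fin n) (Fin n) ℝ} (hM : M.PosSemidef) (x y : Fin n → ℝ) :
    (x ⬝ᵥ M *ᵥ y) ^ 2 ≤ (x ⬝ᵥ M *ᵥ x) * (y ⬝ᵥ M *ᵥ y) := by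
  have hMT : Mᵀ = M := by
    have := hM.1; exact isHermitian_iff_isSymm.mp this
  have key : ∀ t : ℝ, 0 ≤ (y ⬝ᵥ M *ᵥ y) * (t * t) + (2 * (x ⬝ᵥ M *ᵥ y)) * t + (x ⬝ᵥ M *ᵥ x) := by
    intro t
    have h := hM.dotProduct_mulVec_nonneg (t • y + x)
    simp only [star_trivial, RCLike.re_to_real] at h
    have : (t • y + x) ⬝ᵥ M *ᵥ (t • y + x)
        = (y ⬝ᵥ M *ᵥ y) * (t * t) + (2 * (x ⬝ᵥ M *ᵥ y)) * t + (x ⬝ᵥ M *ᵥ x) := by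
      simp only [mulVec_add, mulVec_smul, dotProduct_add, add_dotProduct,
        dotProduct_smul, smul_dotProduct, smul_eq_mul, dp_symm hMT y x]
      ring
    linarith [this ▸ h]
  have hd := discrim_le_zero key
  simp only [discrim] at hd
  nlinarith [hd]

/-- Upper-barrier rank-one update. If `uI − A` is positive definite and
`wᵀ(uI − A)⁻¹ w ≤ ε′ < 1`, then `uI − A − w wᵀ` is positive definite and
`Tr[(uI − A − w wᵀ)⁻¹] ≤ Tr[(uI − A)⁻¹] + wᵀ(uI − A)⁻² w / (1 − ε′)`. -/
theorem upper_barrier_rank_one_update (n : ℕ) (A : Matrix (Fin n) (Fin n) ℝ)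
    (hA : A.IsSymm) (u : ℝ) (hu : (u • 1 - A).PosDef)
    (w : Fin n → ℝ) (ε' : ℝ) (hε' : ε' < 1)
    (hw : w ⬝ᵥ ((u • 1 - A)⁻¹ *ᵥ w) ≤ ε') :
    (u • 1 - A - vecMulVec w w).PosDef ∧
      ((u • 1 - A - vecMulVec w w)⁻¹).trace ≤
        ((u • 1 - A)⁻¹).trace + (w ⬝ᵥ (((u • 1 - A)⁻¹ ^ 2) *ᵥ w)) / (1 - ε') := by
  set M := u • (1 : Matrix (Fin n) (Fin n) ℝ) - A with hM
  set W := vecMulVec w w with hW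
  set s := w ⬝ᵥ M⁻¹ *ᵥ w with hs
  have hMdet : IsUnit M.det := isUnit_iff_ne_zero.mpr hu.det_pos.ne'
  have hMinv : M⁻¹.PosDef := hu.inv
  have hMT : Mᵀ = M := isHermitian_iff_isSymm.mp hu.1
  have hMiT : M⁻¹ᵀ = M⁻¹ := isHermitian_iff_isSymm.mp hMinv.1
  have hs0 : 0 ≤ s := by simpa using hMinv.posSemidef.dotProduct_mulVec_nonneg w
  have hs1 : s < 1 := lt_of_le_of_lt hw hε'
  have h1s : (0:ℝ) < 1 - s := by linarith
  -- key Cauchy-Schwarz consequence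
  have hMM : M * M⁻¹ = 1 := mul_nonsing_inv _ hMdet
  have hWHerm : W.IsHermitian := by
    ext i j; simp [hW, conjTranspose_apply, vecMulVec_apply, mul_comm]
  have hposdef : (M - W).PosDef := by
    refine posDef_iff_dotProduct_mulVec.mpr ⟨hu.1.sub hWHerm, fun x hx => ?_⟩
    have hxW : x ⬝ᵥ W *ᵥ x = (w ⬝ᵥ x) ^ 2 := by
      simp only [hW, dotProduct, mulVec, vecMulVec_apply, Finset.mul_sum]
      rw [Finset.sum_comm]
      rw [pow_two, Finset.sum_mul]
      congr 1; ext i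
      rw [Finset.mul_sum]
      congr 1; ext j
      ring
    have hcs := cs hu.posSemidef x (M⁻¹ *ᵥ w)
    have e1 : M *ᵥ (M⁻¹ *ᵥ w) = w := by
      rw [mulVec_mulVec, hMM, one_mulVec]
    have e2 : (M⁻¹ *ᵥ w) ⬝ᵥ w = s := by
      rw [hs]; exact dotProduct_comm _ _
    rw [e1, e2] at hcs
    have hxMx : 0 < x ⬝ᵥ M *ᵥ x := by simpa using hu.dotProduct_mulVec_pos hx
    have hwx : x ⬝ᵥ w = w ⬝ᵥ x := dotProduct_comm _ _
    have : (x ⬝ᵥ w) ^ 2 < x ⬝ᵥ M *ᵥ x := by nlinarith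
    have hval : x ⬝ᵥ (M - W) *ᵥ x = x ⬝ᵥ M *ᵥ x - (w ⬝ᵥ x) ^ 2 := by
      rw [Matrix.sub_mulVec, dotProduct_sub, hxW]
    simp only [star_trivial]
    rw [hval]
    rw [hwx] at this
    linarith
  refine ⟨hposdef, ?_⟩
  -- Sherman-Morrison
  set c := (1 - s)⁻¹ with hc
  set B := M⁻¹ + c • (M⁻¹ * W * M⁻¹) with hB
  have hcs' : c * (1 - s) = 1 := inv_mul_cancel₀ h1s.ne'
  have hright : (M - W) * B = 1 := by
    have h2 : M * (M⁻¹ * W * M⁻¹) = W * M⁻¹ := by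
      rw [← Matrix.mul_assoc, ← Matrix.mul_assoc, hMM, Matrix.one_mul]
    have h3 : W * (M⁻¹ * W * M⁻¹) = s • (W * M⁻¹) := by
      rw [hW, ← Matrix.mul_assoc, ← Matrix.mul_assoc,
        Matrix.mul_assoc (vecMulVec w w) M⁻¹ (vecMulVec w w), ← Matrix.mul_assoc, vmv_mul,
        Matrix.smul_mul, hs]
    rw [hB, Matrix.sub_mul, Matrix.mul_add, Matrix.mul_add, Matrix.mul_smul, Matrix.mul_smul,
      hMM, h2, h3, smul_smul]
    have hceq : c = 1 + c * s := by nlinarith [hcs']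
    have hco : c • (W * M⁻¹) = W * M⁻¹ + (c * s) • (W * M⁻¹) := by
      nth_rewrite 1 [hceq]
      rw [add_smul, one_smul]
    rw [hco]
    abel
  have hinv : (M - W)⁻¹ = B := inv_eq_right_inv hright
  rw [hinv, hB, trace_add, trace_smul]
  have htr : (M⁻¹ * W * M⁻¹).trace = w ⬝ᵥ (M⁻¹ * M⁻¹) *ᵥ w := by
    rw [trace_mul_cycle, trace_mul_comm, hW, trace_vmv_mul]
  have hq0 : 0 ≤ w ⬝ᵥ (M⁻¹ * M⁻¹) *ᵥ w := by
    have : w ⬝ᵥ (M⁻¹ * M⁻¹) *ᵥ w = (M⁻¹ *ᵥ w) ⬝ᵥ (M⁻¹ *ᵥ w) := by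
      rw [← mulVec_mulVec, dotProduct_mulVec, ← mulVec_transpose, hMiT]
    rw [this]
    exact Finset.sum_nonneg fun i _ => mul_self_nonneg _
  rw [htr]
  have hpow : (M⁻¹ ^ 2 : Matrix (Fin n) (Fin n) ℝ) = M⁻¹ * M⁻¹ := sq M⁻¹
  rw [hpow]
  have : c • (w ⬝ᵥ (M⁻¹ * M⁻¹) *ᵥ w) ≤ (w ⬝ᵥ (M⁻¹ * M⁻¹) *ᵥ w) / (1 - ε') := by
    rw [smul_eq_mul, hc, ← div_eq_inv_mul]
    gcongr
    all_goals linarith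
  linarith
end

section
/- Let A be a real symmetric n×n matrix, l ∈ ℝ with A − lI positive definite, and w ∈ ℝⁿ. Suppose wᵀ(A − lI)⁻¹ w ≤ ε′ for some ε′ ≥ 0. Then A + w wᵀ − lI is positive definite and Tr[(A + w wᵀ − lI)⁻¹] ≤ Tr[(A − lI)⁻¹] − (wᵀ(A − lI)⁻² w)/(1 + ε′). -/
open Matrix

section Aux

variable {n : ℕ}

lemma mul_vecMulVec_aux (B : Matrix (Fin n) (Fin n) ℝ) (u v : Fin n → ℝ) :
    B * vecMulVec u v = vecMulVec (B *ᵥ u) v := by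
  ext i j
  simp only [Matrix.mul_apply, vecMulVec_apply, mulVec, dotProduct, Finset.sum_mul]
  congr 1; ext k; ring

lemma vecMulVec_mul_aux (B : Matrix (Fin n) (Fin n) ℝ) (u v : Fin n → ℝ) :
    vecMulVec u v * B = vecMulVec u (v ᵥ* B) := by
  ext i j
  simp only [Matrix.mul_apply, vecMulVec_apply, vecMul, dotProduct, Finset.mul_sum]
  congr 1; ext k; ring

lemma vecMulVec_mul_vecMulVec_aux (u v x y : Fin n → ℝ) :
    vecMulVec u v * vecMulVec x y = (v ⬝ᵥ x) • vecMulVec u y := by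
  ext i j
  simp only [Matrix.mul_apply, vecMulVec_apply, dotProduct, Matrix.smul_apply, smul_eq_mul,
    Finset.sum_mul]
  exact Finset.sum_congr rfl fun k _ => by ring

lemma trace_vecMulVec_aux (u v : Fin n → ℝ) :
    (vecMulVec u v).trace = u ⬝ᵥ v := by
  simp [Matrix.trace, Matrix.diag, vecMulVec_apply, dotProduct]

lemma posSemidef_vecMulVec_aux (w : Fin n → ℝ) : (vecMulVec w w).PosSemidef := by
  refine PosSemidef.of_dotProduct_mulVec_nonneg ?_ ?_
  · ext i j
    simp [vecMulVec_apply, mul_comm]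
  · intro x
    have h : star x ⬝ᵥ (vecMulVec w w *ᵥ x) = (w ⬝ᵥ x) * (w ⬝ᵥ x) := by
      simp only [star_trivial, dotProduct, mulVec, vecMulVec_apply, Finset.mul_sum,
        Finset.sum_mul]
      rw [Finset.sum_comm]
      exact Finset.sum_congr rfl fun k _ => Finset.sum_congr rfl fun j _ => by ring
    rw [h]
    exact mul_self_nonneg _

end Aux

/-- Lower-barrier rank-one update. If `A − lI` is positive definite and
`wᵀ(A − lI)⁻¹ w ≤ ε′` with `ε′ ≥ 0`, then `A + w wᵀ − lI` is positive definite and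
`Tr[(A + w wᵀ − lI)⁻¹] ≤ Tr[(A − lI)⁻¹] − wᵀ(A − lI)⁻² w / (1 + ε′)`. -/
theorem lower_barrier_rank_one_update (n : ℕ) (A : Matrix (Fin n) (Fin n) ℝ)
    (hA : A.IsSymm) (l : ℝ) (hl : (A - l • 1).PosDef)
    (w : Fin n → ℝ) (ε' : ℝ) (hε' : 0 ≤ ε')
    (hw : w ⬝ᵥ ((A - l • 1)⁻¹ *ᵥ w) ≤ ε') :
    (A + vecMulVec w w - l • 1).PosDef ∧
      ((A + vecMulVec w w - l • 1)⁻¹).trace ≤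
        ((A - l • 1)⁻¹).trace - (w ⬝ᵥ (((A - l • 1)⁻¹ ^ 2) *ᵥ w)) / (1 + ε') := by
  set M : Matrix (Fin n) (Fin n) ℝ := A - l • 1 with hM
  set V : Matrix (Fin n) (Fin n) ℝ := vecMulVec w w with hV
  have hrw : A + vecMulVec w w - l • 1 = M + V := by rw [hM, hV]; abel
  have hVps : V.PosSemidef := posSemidef_vecMulVec_aux w
  have hMV : (M + V).PosDef := hl.add_posSemidef hVps
  have hMinv : M⁻¹.PosDef := hl.inv
  have hMsymm : M⁻¹ᵀ = M⁻¹ := hMinv.isHermitian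
  set s : ℝ := w ⬝ᵥ (M⁻¹ *ᵥ w) with hs
  have hs0 : 0 ≤ s := by simpa [hs] using hMinv.posSemidef.dotProduct_mulVec_nonneg w
  have hs1 : (0:ℝ) < 1 + s := by linarith
  have hvm : w ᵥ* M⁻¹ = M⁻¹ *ᵥ w := by
    conv_lhs => rw [← hMsymm]
    rw [vecMul_transpose]
  set c : ℝ := (1 + s)⁻¹ with hc
  set X : Matrix (Fin n) (Fin n) ℝ := M⁻¹ - c • (M⁻¹ * V * M⁻¹) with hX
  have hMM : M * M⁻¹ = 1 := mul_nonsing_inv M hl.det_pos.ne'.isUnit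
  have hVMV : V * M⁻¹ * V = s • V := by
    rw [hV, vecMulVec_mul_aux, vecMulVec_mul_vecMulVec_aux, hvm, dotProduct_comm, ← hs]
  have h1 : (M + V) * X = 1 := by
    have expand : (M + V) * X
        = 1 + V * M⁻¹ - c • (V * M⁻¹) - (c * s) • (V * M⁻¹) := by
      rw [hX, Matrix.add_mul, Matrix.mul_sub, Matrix.mul_sub, hMM,
        Matrix.mul_smul, Matrix.mul_smul]
      have e1 : M * (M⁻¹ * V * M⁻¹) = V * M⁻¹ := by
        rw [← Matrix.mul_assoc, ← Matrix.mul_assoc, hMM, Matrix.one_mul]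
      have e2 : V * (M⁻¹ * V * M⁻¹) = (s : ℝ) • (V * M⁻¹) := by
        have h' : V * (M⁻¹ * V * M⁻¹) = (V * M⁻¹ * V) * M⁻¹ := by
          simp only [Matrix.mul_assoc]
        rw [h', hVMV, Matrix.smul_mul]
      rw [e1, e2, smul_smul]
      abel
    rw [expand]
    have hcoef : (1 : ℝ) - c - c * s = 0 := by
      rw [hc, sub_sub, ← mul_one_add, inv_mul_cancel₀ hs1.ne', sub_self]
    have : V * M⁻¹ - c • (V * M⁻¹) - (c * s) • (V * M⁻¹) = 0 := by
      rw [show V * M⁻¹ - c • (V * M⁻¹) - (c * s) • (V * M⁻¹)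
          = ((1 : ℝ) - c - c * s) • (V * M⁻¹) by
        rw [sub_smul, sub_smul, one_smul], hcoef, zero_smul]
    calc 1 + V * M⁻¹ - c • (V * M⁻¹) - (c * s) • (V * M⁻¹)
        = 1 + (V * M⁻¹ - c • (V * M⁻¹) - (c * s) • (V * M⁻¹)) := by abel
      _ = 1 := by rw [this, add_zero]
  have hinv : (M + V)⁻¹ = X := inv_eq_right_inv h1
  -- trace computation
  set t : ℝ := w ⬝ᵥ ((M⁻¹ ^ 2) *ᵥ w) with ht
  have hmid : M⁻¹ * V * M⁻¹ = vecMulVec (M⁻¹ *ᵥ w) (M⁻¹ *ᵥ w) := by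
    rw [hV, mul_vecMulVec_aux, vecMulVec_mul_aux, hvm]
  have htt : t = (M⁻¹ *ᵥ w) ⬝ᵥ (M⁻¹ *ᵥ w) := by
    rw [ht, pow_two, ← Matrix.mulVec_mulVec, dotProduct_mulVec, hvm]
  have ht0 : 0 ≤ t := by
    rw [htt]
    exact Finset.sum_nonneg fun i _ => mul_self_nonneg _
  have htrX : X.trace = M⁻¹.trace - c * t := by
    rw [hX, trace_sub, trace_smul, hmid, trace_vecMulVec_aux, ← htt, smul_eq_mul]
  refine ⟨hrw ▸ hMV, ?_⟩
  rw [hrw, hinv, htrX]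
  have key : t / (1 + ε') ≤ c * t := by
    rw [hc, inv_mul_eq_div]
    have h1e : (1:ℝ) + s ≤ 1 + ε' := by linarith
    gcongr
  linarith [key]
end
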